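/- Let Δ > 0 and p ≥ 0. Let X be a real random variable with E[X²] ≤ p, and let U be uniformly distributed on [−Δ/2, Δ/2] and independent of X. Let f be the density of Y = X + U, and assume f · log₂ f is Lebesgue integrable (with 0·log 0 = 0). Then the differential entropy of Y satisfies −∫_ℝ f(y) log₂ f(y) dy < (1/2)·log₂( 2πe·(Δ²/12 + p) ). -/

import Mathlib

open MeasureTheory ProbabilityTheory Real
open scoped ENNReal NNReal

/-- The uniform probability measure on the interval `[-Δ/2, Δ/2]`. -/
noncomputable def uniformDitherMeasure (Δ : ℝ) : Measure ℝ :=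
  (ENNReal.ofReal Δ)⁻¹ • volume.restrict (Set.Icc (-(Δ / 2)) (Δ / 2))

lemma gibbs_aux {a b : ℝ} (ha : 0 ≤ a) (hb : 0 < b) :
    0 ≤ a * Real.log a - a * Real.log b - a + b ∧
    (a * Real.log a - a * Real.log b - a + b = 0 → a = b) := by
  rcases eq_or_lt_of_le ha with h0 | ha'
  · refine ⟨by simp [← h0, hb.le], fun h => ?_⟩
    exfalso; rw [← h0] at h; simp at h; exact hb.ne' h
  · have hba : 0 < b / a := div_pos hb ha'
    have hab : a * (b / a) = b := by field_simp
    have hlog : Real.log (b / a) = Real.log b - Real.log a := Real.log_div hb.ne' ha'.ne'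
    constructor
    · have key : Real.log (b / a) ≤ b / a - 1 := Real.log_le_sub_one_of_pos hba
      have := mul_le_mul_of_nonneg_left key ha'.le
      rw [hlog] at this
      nlinarith
    · intro h
      by_contra hne
      have hne' : b / a ≠ 1 := by
        intro h1
        exact hne ((div_eq_one_iff_eq ha'.ne').mp h1).symm
      have key : Real.log (b / a) < b / a - 1 := Real.log_lt_sub_one_of_pos hba hne'
      have := mul_lt_mul_of_pos_left key ha'
      rw [hlog] at this
      nlinarith

lemma integral_cos_gaussian {b : ℝ} (hb : 0 < b) (t : ℝ) :
    ∫ x : ℝ, Real.cos (t * x) * Real.exp (-b * x ^ 2)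
      = Real.sqrt (π / b) * Real.exp (-t ^ 2 / (4 * b)) := by
  have hbc : (-b : ℂ).re < 0 := by simpa using hb
  have h := integral_cexp_quadratic hbc (t * Complex.I) 0
  have hint : Integrable (fun x : ℝ => Complex.exp ((-b : ℂ) * x ^ 2 + (t * Complex.I) * x + 0)) :=
    integrable_cexp_quadratic' hbc _ _
  have hre := integral_re hint
  have hpt : ∀ x : ℝ, RCLike.re (Complex.exp ((-b : ℂ) * x ^ 2 + (t * Complex.I) * x + 0))
      = Real.cos (t * x) * Real.exp (-b * x ^ 2) := by
    intro x
    have h1 : ((-b : ℂ) * x ^ 2 + (t * Complex.I) * x + 0)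
        = ((-b * x ^ 2 : ℝ) : ℂ) + ((t * x : ℝ) : ℂ) * Complex.I := by push_cast; ring
    rw [h1, Complex.exp_add, RCLike.re_to_complex, Complex.mul_re, ← Complex.ofReal_exp,
      Complex.ofReal_re, Complex.ofReal_im, Complex.exp_ofReal_mul_I_re]
    ring
  rw [h] at hre
  have hrhs : RCLike.re ((π / -(-b : ℂ)) ^ (1 / 2 : ℂ)
      * Complex.exp (0 - (t * Complex.I) ^ 2 / (4 * (-b : ℂ))))
      = Real.sqrt (π / b) * Real.exp (-t ^ 2 / (4 * b)) := by
    have e1 : (0 - (t * Complex.I) ^ 2 / (4 * (-b : ℂ))) = ((-t ^ 2 / (4 * b) : ℝ) : ℂ) := by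
      have hb' : (b : ℂ) ≠ 0 := by exact_mod_cast hb.ne'
      rw [mul_pow, Complex.I_sq]
      push_cast
      field_simp
      ring
    have e2 : ((π / -(-b : ℂ)) ^ (1 / 2 : ℂ)) = ((Real.sqrt (π / b) : ℝ) : ℂ) := by
      rw [Real.sqrt_eq_rpow]
      rw [show (π / -(-b : ℂ)) = ((π / b : ℝ) : ℂ) by push_cast; ring]
      rw [show (1 / 2 : ℂ) = ((1 / 2 : ℝ) : ℂ) by norm_num]
      rw [← Complex.ofReal_cpow (by positivity)]
    rw [e1, e2, ← Complex.ofReal_exp, ← Complex.ofReal_mul, RCLike.re_to_complex,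
      Complex.ofReal_re]
  rw [hrhs] at hre
  rw [← hre]
  exact integral_congr_ae (Filter.Eventually.of_forall fun x => (hpt x).symm)

lemma unif_integral {Δ : ℝ} (hΔ : 0 < Δ) (h : ℝ → ℝ) :
    ∫ u, h u ∂(uniformDitherMeasure Δ) = Δ⁻¹ * ∫ u in (-(Δ / 2))..(Δ / 2), h u := by
  unfold uniformDitherMeasure
  rw [integral_smul_measure, intervalIntegral.integral_of_le (by linarith),
    ← MeasureTheory.integral_Icc_eq_integral_Ioc]
  simp [ENNReal.toReal_inv, ENNReal.toReal_ofReal hΔ.le, smul_eq_mul]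

/-- Strict maximum-entropy bound: if `E[X²] ≤ p`, `U` is uniform on `[-Δ/2, Δ/2]` and
independent of `X`, and `f` is the density of `Y = X + U` with `f · log₂ f` integrable,
then the differential entropy of `Y` satisfies
`−∫ f log₂ f < (1/2)·log₂(2πe·(Δ²/12 + p))`. -/
theorem stmt_9 {Ω : Type*} [MeasurableSpace Ω] (P : Measure Ω) [IsProbabilityMeasure P]
    (Δ p : ℝ) (hΔ : 0 < Δ) (hp : 0 ≤ p)
    (X U : Ω → ℝ) (hX : Measurable X) (hU : Measurable U)
    (hX2 : Integrable (fun ω => X ω ^ 2) P)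
    (hmom : ∫ ω, X ω ^ 2 ∂P ≤ p)
    (hindep : IndepFun X U P)
    (hunif : Measure.map U P = uniformDitherMeasure Δ)
    (f : ℝ → ℝ) (hf : Measurable f) (hf0 : ∀ y, 0 ≤ f y)
    (hdens : Measure.map (fun ω => X ω + U ω) P
      = volume.withDensity fun y => ENNReal.ofReal (f y))
    (hint : Integrable (fun y => f y * logb 2 (f y)) volume) :
    - ∫ y, f y * logb 2 (f y)
      < (1 / 2 : ℝ) * logb 2 (2 * π * Real.exp 1 * (Δ ^ 2 / 12 + p)) := by
  set V : ℝ := Δ ^ 2 / 12 + p with hVdef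
  have hV : 0 < V := by positivity
  have hXUm : Measurable fun ω => X ω + U ω := hX.add hU
  haveI : IsProbabilityMeasure (Measure.map (fun ω => X ω + U ω) P) :=
    Measure.isProbabilityMeasure_map hXUm.aemeasurable
  -- transfer integrals through the density
  have htrans : ∀ h : ℝ → ℝ,
      ∫ y, h y ∂(Measure.map (fun ω => X ω + U ω) P) = ∫ y, f y * h y := by
    intro h
    rw [hdens]
    rw [show (fun y => ENNReal.ofReal (f y)) = (fun y => ((f y).toNNReal : ℝ≥0∞)) from rfl]
    rw [integral_withDensity_eq_integral_smul (hf.real_toNNReal) h]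
    congr 1
    funext y
    simp [NNReal.smul_def, Real.coe_toNNReal _ (hf0 y)]
  have hμint : ∀ h : ℝ → ℝ,
      Integrable h (Measure.map (fun ω => X ω + U ω) P)
        ↔ Integrable (fun y => h y * f y) volume := by
    intro h
    rw [hdens, integrable_withDensity_iff hf.ennreal_ofReal
      (Filter.Eventually.of_forall fun y => ENNReal.ofReal_lt_top)]
    constructor <;> intro hh <;> refine hh.congr (Filter.Eventually.of_forall fun y => ?_) <;>
      simp [ENNReal.toReal_ofReal (hf0 y)]
  have h_f_one : ∫ y, f y = 1 := by
    have := htrans fun _ => (1 : ℝ)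
    simp only [integral_const, measure_univ, probReal_univ, ENNReal.toReal_one, one_smul, mul_one] at this
    linarith [this]
  -- U is a.e. bounded
  have hUb : ∀ᵐ ω ∂P, U ω ∈ Set.Icc (-(Δ / 2)) (Δ / 2) := by
    have hmeas : MeasurableSet (Set.Icc (-(Δ / 2)) (Δ / 2) : Set ℝ)ᶜ :=
      measurableSet_Icc.compl
    have h0 : P (U ⁻¹' (Set.Icc (-(Δ / 2)) (Δ / 2))ᶜ) = 0 := by
      rw [← Measure.map_apply hU hmeas, hunif]
      unfold uniformDitherMeasure
      rw [Measure.smul_apply, Measure.restrict_apply hmeas]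
      simp
    rw [ae_iff]
    convert h0 using 2
    rfl
  have hXint : Integrable X P := by
    refine (hX2.add (integrable_const 1)).mono' hX.aestronglyMeasurable
      (Filter.Eventually.of_forall fun ω => ?_)
    have := sq_abs (X ω)
    simp only [Pi.add_apply, Real.norm_eq_abs]
    nlinarith [sq_nonneg (|X ω| - 1), abs_nonneg (X ω)]
  have hUint : Integrable U P := by
    refine (integrable_const (Δ / 2)).mono' hU.aestronglyMeasurable (hUb.mono fun ω hω => ?_)
    rw [Real.norm_eq_abs]
    exact abs_le.mpr ⟨by linarith [hω.1], hω.2⟩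
  have hU2int : Integrable (fun ω => U ω ^ 2) P := by
    refine (integrable_const ((Δ / 2) ^ 2)).mono' (hU.pow_const 2).aestronglyMeasurable
      (hUb.mono fun ω hω => ?_)
    rw [Real.norm_eq_abs, abs_of_nonneg (sq_nonneg _)]
    obtain ⟨h1, h2⟩ := hω
    nlinarith
  have hXUint : Integrable (fun ω => X ω * U ω) P := hindep.integrable_mul hXint hUint
  -- moments of U
  have hEU : ∫ ω, U ω ∂P = 0 := by
    have : ∫ ω, U ω ∂P = ∫ u, u ∂(Measure.map U P) :=
      (integral_map hU.aemeasurable aestronglyMeasurable_id).symm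
    rw [this, hunif, unif_integral hΔ, integral_id]
    ring
  have hEU2 : ∫ ω, U ω ^ 2 ∂P = Δ ^ 2 / 12 := by
    have : ∫ ω, U ω ^ 2 ∂P = ∫ u, u ^ 2 ∂(Measure.map U P) :=
      (integral_map hU.aemeasurable
        (continuous_pow 2).aestronglyMeasurable).symm
    rw [this, hunif, unif_integral hΔ, integral_pow]
    field_simp
    ring
  have hEXU : ∫ ω, X ω * U ω ∂P = 0 := by
    have h := hindep.integral_mul_eq_mul_integral hXint.1 hUint.1
    calc ∫ ω, X ω * U ω ∂P = integral P (X * U) := rfl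
      _ = integral P X * integral P U := h
      _ = 0 := by rw [show integral P U = 0 from hEU, mul_zero]
  -- second moment of Y
  set m : ℝ := ∫ ω, (X ω + U ω) ^ 2 ∂P with hmdef
  have hexp : (fun ω => (X ω + U ω) ^ 2)
      = fun ω => X ω ^ 2 + 2 * (X ω * U ω) + U ω ^ 2 := funext fun ω => by ring
  have hm_int : Integrable (fun ω => (X ω + U ω) ^ 2) P := by
    rw [hexp]; exact (hX2.add (hXUint.const_mul 2)).add hU2int
  have i2 : Integrable (fun ω => 2 * (X ω * U ω)) P := hXUint.const_mul 2
  have i12 : Integrable (fun ω => X ω ^ 2 + 2 * (X ω * U ω)) P := hX2.add i2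
  have hm_val : m = (∫ ω, X ω ^ 2 ∂P) + Δ ^ 2 / 12 := by
    rw [hmdef, hexp, integral_add i12 hU2int, integral_add hX2 i2,
      integral_const_mul, hEXU, hEU2]
    ring
  have hmV : m ≤ V := by rw [hm_val, hVdef]; linarith
  have hm0 : 0 ≤ m := integral_nonneg fun ω => sq_nonneg _
  -- transfer second moment
  have hfy2 : ∫ y, f y * y ^ 2 = m := by
    have h1 := htrans fun y => y ^ 2
    have h2 : ∫ y, y ^ 2 ∂(Measure.map (fun ω => X ω + U ω) P)
        = ∫ ω, (X ω + U ω) ^ 2 ∂P :=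
      integral_map hXUm.aemeasurable (continuous_pow 2).aestronglyMeasurable
    rw [h2] at h1
    rw [← h1, hmdef]
  have hfy2_int : Integrable (fun y => f y * y ^ 2) volume := by
    have h1 : Integrable (fun y : ℝ => y ^ 2) (Measure.map (fun ω => X ω + U ω) P) := by
      rw [integrable_map_measure (continuous_pow 2).aestronglyMeasurable hXUm.aemeasurable]
      exact hm_int
    have := (hμint fun y => y ^ 2).mp h1
    exact this.congr (Filter.Eventually.of_forall fun y => by ring)
  have hfint : Integrable f volume := by
    have := (hμint fun _ => (1 : ℝ)).mp (integrable_const 1)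
    exact this.congr (Filter.Eventually.of_forall fun y => by ring)
  -- the Gaussian comparator
  have h2πV : 0 < 2 * π * V := by positivity
  set g : ℝ → ℝ := fun y => (Real.sqrt (2 * π * V))⁻¹ * Real.exp (-(1 / (2 * V)) * y ^ 2)
    with hgdef
  have hsq : 0 < Real.sqrt (2 * π * V) := Real.sqrt_pos.mpr h2πV
  have hg_pos : ∀ y, 0 < g y := fun y => mul_pos (inv_pos.mpr hsq) (Real.exp_pos _)
  have hb2V : (0 : ℝ) < 1 / (2 * V) := by positivity
  have hgint : Integrable g volume := (integrable_exp_neg_mul_sq hb2V).const_mul _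
  have hg1 : ∫ y, g y = 1 := by
    rw [hgdef]
    simp only
    rw [integral_const_mul, integral_gaussian,
      show π / (1 / (2 * V)) = 2 * π * V by field_simp]
    exact inv_mul_cancel₀ hsq.ne'
  have hlogg : ∀ y, Real.log (g y)
      = -(1 / 2) * Real.log (2 * π * V) - 1 / (2 * V) * y ^ 2 := by
    intro y
    rw [hgdef]
    simp only
    rw [Real.log_mul (inv_ne_zero hsq.ne') (Real.exp_ne_zero _), Real.log_inv,
      Real.log_sqrt h2πV.le, Real.log_exp]
    ring
  -- natural-log integrand
  have hlog2 : (0 : ℝ) < Real.log 2 := Real.log_pos one_lt_two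
  have hlogb_eq : (fun y => f y * Real.log (f y))
      = fun y => f y * Real.logb 2 (f y) * Real.log 2 := by
    funext y
    rw [Real.logb]
    field_simp
  have hflogf_int : Integrable (fun y => f y * Real.log (f y)) volume := by
    rw [hlogb_eq]; exact hint.mul_const _
  have hflogg_eq : (fun y => f y * Real.log (g y))
      = fun y => (-(1 / 2) * Real.log (2 * π * V)) * f y - 1 / (2 * V) * (f y * y ^ 2) := by
    funext y
    rw [hlogg y]
    ring
  have hflogg_int : Integrable (fun y => f y * Real.log (g y)) volume := by
    rw [hflogg_eq]
    exact Integrable.sub (hfint.const_mul _) (hfy2_int.const_mul _)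
  have ic : Integrable (fun y => (-(1 / 2) * Real.log (2 * π * V)) * f y) volume :=
    hfint.const_mul _
  have id2 : Integrable (fun y => 1 / (2 * V) * (f y * y ^ 2)) volume :=
    hfy2_int.const_mul _
  have hcross : ∫ y, f y * Real.log (g y)
      = -(1 / 2) * Real.log (2 * π * V) - 1 / (2 * V) * m := by
    rw [hflogg_eq, integral_sub ic id2,
      integral_const_mul, integral_const_mul, h_f_one, hfy2, mul_one]
  -- the Gibbs gap
  set φ : ℝ → ℝ := fun y =>
    f y * Real.log (f y) - f y * Real.log (g y) - f y + g y with hφdef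
  have hφ0 : ∀ y, 0 ≤ φ y := fun y => (gibbs_aux (hf0 y) (hg_pos y)).1
  have ia : Integrable (fun y => f y * Real.log (f y) - f y * Real.log (g y)) volume :=
    hflogf_int.sub hflogg_int
  have ib : Integrable (fun y => f y * Real.log (f y) - f y * Real.log (g y) - f y) volume :=
    ia.sub hfint
  have hφint : Integrable φ volume := ib.add hgint
  have hφval : ∫ y, φ y
      = (∫ y, f y * Real.log (f y)) - ∫ y, f y * Real.log (g y) := by
    rw [hφdef]
    simp only
    rw [integral_add ib hgint, integral_sub ia hfint,
      integral_sub hflogf_int hflogg_int, h_f_one, hg1]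
    ring
  have hI0 : 0 ≤ ∫ y, φ y := integral_nonneg hφ0
  -- main estimate in natural log
  have hmain : - ∫ y, f y * Real.log (f y)
      < (1 / 2) * Real.log (2 * π * Real.exp 1 * V) := by
    have hlogE : Real.log (2 * π * Real.exp 1 * V) = Real.log (2 * π * V) + 1 := by
      rw [show 2 * π * Real.exp 1 * V = 2 * π * V * Real.exp 1 by ring,
        Real.log_mul h2πV.ne' (Real.exp_ne_zero 1), Real.log_exp]
    have hent : ∫ y, f y * Real.log (f y)
        = -(1 / 2) * Real.log (2 * π * V) - 1 / (2 * V) * m + ∫ y, φ y := by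
      rw [hφval]; rw [hcross]; ring
    have hm2V : 1 / (2 * V) * m ≤ 1 / 2 := by
      rw [div_mul_eq_mul_div, one_mul, div_le_div_iff₀ (by positivity) (by norm_num)]
      linarith
    rcases lt_or_eq_of_le hI0 with hIpos | hIzero
    · rw [hent, hlogE]; linarith
    · -- equality case: f = g a.e., contradiction via the characteristic function
      exfalso
      have hφae : φ =ᵐ[volume] 0 :=
        (integral_eq_zero_iff_of_nonneg hφ0 hφint).mp hIzero.symm
      have hfg : f =ᵐ[volume] g := by
        refine hφae.mono fun y hy => ?_
        exact (gibbs_aux (hf0 y) (hg_pos y)).2 (by simpa using hy)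
      set t : ℝ := 2 * π / Δ with htdef
      have ht : 0 < t := by positivity
      -- E cos(tU) = 0, E sin(tU) = 0
      have htΔ : t * (Δ / 2) = π := by rw [htdef]; field_simp
      have htΔ' : t * (-(Δ / 2)) = -π := by rw [htdef]; field_simp
      have hEcosU : ∫ ω, Real.cos (t * U ω) ∂P = 0 := by
        have : ∫ ω, Real.cos (t * U ω) ∂P = ∫ u, Real.cos (t * u) ∂(Measure.map U P) :=
          (integral_map hU.aemeasurable
            (Real.continuous_cos.comp (continuous_const.mul continuous_id)).aestronglyMeasurable).symm
        rw [this, hunif, unif_integral hΔ,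
          intervalIntegral.integral_comp_mul_left (fun x => Real.cos x) ht.ne',
          htΔ, htΔ', integral_cos]
        simp [Real.sin_pi]
      have hEsinU : ∫ ω, Real.sin (t * U ω) ∂P = 0 := by
        have : ∫ ω, Real.sin (t * U ω) ∂P = ∫ u, Real.sin (t * u) ∂(Measure.map U P) :=
          (integral_map hU.aemeasurable
            (Real.continuous_sin.comp (continuous_const.mul continuous_id)).aestronglyMeasurable).symm
        rw [this, hunif, unif_integral hΔ,
          intervalIntegral.integral_comp_mul_left (fun x => Real.sin x) ht.ne',
          htΔ, htΔ', integral_sin]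
        simp [Real.cos_pi]
      -- bounded integrability
      have hbd : ∀ (h : ℝ → ℝ) (W : Ω → ℝ), Measurable W → Continuous h → (∀ x, |h x| ≤ 1) →
          Integrable (fun ω => h (t * W ω)) P := by
        intro h W hW hc hb
        refine (integrable_const 1).mono'
          ((hc.comp (continuous_const.mul continuous_id)).measurable.comp hW).aestronglyMeasurable
          (Filter.Eventually.of_forall fun ω => ?_)
        rw [Real.norm_eq_abs]; exact hb _
      have hcosX := hbd Real.cos X hX Real.continuous_cos fun x => Real.abs_cos_le_one x
      have hcosU := hbd Real.cos U hU Real.continuous_cos fun x => Real.abs_cos_le_one x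
      have hsinX := hbd Real.sin X hX Real.continuous_sin fun x => Real.abs_sin_le_one x
      have hsinU := hbd Real.sin U hU Real.continuous_sin fun x => Real.abs_sin_le_one x
      -- independence of the composed variables
      have hicos : IndepFun (fun ω => Real.cos (t * X ω)) (fun ω => Real.cos (t * U ω)) P :=
        hindep.comp (Real.measurable_cos.comp (measurable_const_mul t))
          (Real.measurable_cos.comp (measurable_const_mul t))
      have hisin : IndepFun (fun ω => Real.sin (t * X ω)) (fun ω => Real.sin (t * U ω)) P :=
        hindep.comp (Real.measurable_sin.comp (measurable_const_mul t))
          (Real.measurable_sin.comp (measurable_const_mul t))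
      have hprod1 : ∫ ω, Real.cos (t * X ω) * Real.cos (t * U ω) ∂P = 0 := by
        calc ∫ ω, Real.cos (t * X ω) * Real.cos (t * U ω) ∂P
            = integral P ((fun ω => Real.cos (t * X ω)) * fun ω => Real.cos (t * U ω)) := rfl
          _ = (∫ ω, Real.cos (t * X ω) ∂P) * ∫ ω, Real.cos (t * U ω) ∂P :=
              hicos.integral_mul_eq_mul_integral hcosX.1 hcosU.1
          _ = 0 := by rw [hEcosU, mul_zero]
      have hprod2 : ∫ ω, Real.sin (t * X ω) * Real.sin (t * U ω) ∂P = 0 := by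
        calc ∫ ω, Real.sin (t * X ω) * Real.sin (t * U ω) ∂P
            = integral P ((fun ω => Real.sin (t * X ω)) * fun ω => Real.sin (t * U ω)) := rfl
          _ = (∫ ω, Real.sin (t * X ω) ∂P) * ∫ ω, Real.sin (t * U ω) ∂P :=
              hisin.integral_mul_eq_mul_integral hsinX.1 hsinU.1
          _ = 0 := by rw [hEsinU, mul_zero]
      have hcosY : ∫ ω, Real.cos (t * (X ω + U ω)) ∂P = 0 := by
        have hsplit : (fun ω => Real.cos (t * (X ω + U ω)))
            = fun ω => Real.cos (t * X ω) * Real.cos (t * U ω)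
              - Real.sin (t * X ω) * Real.sin (t * U ω) := by
          funext ω; rw [mul_add, Real.cos_add]
        have i1 : Integrable (fun ω => Real.cos (t * X ω) * Real.cos (t * U ω)) P :=
          hicos.integrable_mul hcosX hcosU
        have i2 : Integrable (fun ω => Real.sin (t * X ω) * Real.sin (t * U ω)) P :=
          hisin.integrable_mul hsinX hsinU
        rw [hsplit, integral_sub i1 i2, hprod1, hprod2, sub_zero]
      -- the same integral computed from the Gaussian density
      have hmapcos : ∫ y, Real.cos (t * y) ∂(Measure.map (fun ω => X ω + U ω) P)
          = ∫ ω, Real.cos (t * (X ω + U ω)) ∂P :=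
        integral_map hXUm.aemeasurable
          (Real.continuous_cos.comp (continuous_const.mul continuous_id)).aestronglyMeasurable
      have htranscos := htrans fun y => Real.cos (t * y)
      have hcongr : ∫ y, f y * Real.cos (t * y) = ∫ y, g y * Real.cos (t * y) :=
        integral_congr_ae (hfg.mono fun y hy => by dsimp only; rw [hy])
      have hgauss : ∫ y, g y * Real.cos (t * y)
          = (Real.sqrt (2 * π * V))⁻¹
            * (Real.sqrt (π / (1 / (2 * V))) * Real.exp (-t ^ 2 / (4 * (1 / (2 * V))))) := by
        have : (fun y => g y * Real.cos (t * y))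
            = fun y => (Real.sqrt (2 * π * V))⁻¹
              * (Real.cos (t * y) * Real.exp (-(1 / (2 * V)) * y ^ 2)) := by
          funext y; rw [hgdef]; ring
        rw [this, integral_const_mul, integral_cos_gaussian hb2V t]
      have hpos : 0 < ∫ y, g y * Real.cos (t * y) := by
        rw [hgauss]
        have : (0 : ℝ) < π / (1 / (2 * V)) := by positivity
        positivity
      rw [hmapcos, hcosY] at htranscos
      rw [← hcongr, ← htranscos] at hpos
      exact lt_irrefl _ hpos
  -- convert to log base 2
  have hLHS : ∫ y, f y * Real.logb 2 (f y)
      = (∫ y, f y * Real.log (f y)) / Real.log 2 := by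
    have : (fun y => f y * Real.logb 2 (f y))
        = fun y => (f y * Real.log (f y)) / Real.log 2 := by
      funext y; rw [Real.logb]; ring
    rw [this, integral_div]
  rw [hLHS]
  calc - ((∫ y, f y * Real.log (f y)) / Real.log 2)
      = (- ∫ y, f y * Real.log (f y)) / Real.log 2 := by ring
    _ < (1 / 2 * Real.log (2 * π * Real.exp 1 * V)) / Real.log 2 :=
        (div_lt_div_iff_of_pos_right hlog2).mpr hmain
    _ = 1 / 2 * Real.logb 2 (2 * π * Real.exp 1 * V) := by rw [Real.logb]; ring
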